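/- If a set system (X,𝓕) has a strict 2^k-ladder, then its thicket dimension is at least k: there exists a full X-labeled complete balanced binary tree of depth k over 𝓕. -/

import Mathlib

/-- A leaf `v` (a binary string) of an `X`-labeled tree with labeling `lab` is
realized by `F` if, for every proper prefix `u` of `v`, the label of `u` lies
in `F` iff the bit of `v` following `u` is `false` (left). -/
def RealizedBy {X : Type*} (lab : List Bool → X) (v : List Bool) (F : Set X) : Prop :=
  ∀ i : Fin v.length, (lab (v.take i) ∈ F ↔ v.get i = false)

/-- There is a full `X`-labeled complete balanced binary tree of depth `n` over `𝓕`: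
a labeling of strings (internal vertices are those of length `< n`) such that every
leaf (string of length `n`) is realized by some member of `𝓕`. -/
def FullTree {X : Type*} (𝓕 : Set (Set X)) (n : ℕ) : Prop :=
  ∃ lab : List Bool → X, ∀ v : List Bool, v.length = n → ∃ F ∈ 𝓕, RealizedBy lab v F

/-- The thicket dimension: the supremum of depths of full trees, with value `⊥`
(representing `-1`) for the empty family and `⊤` (representing `ω`) when there
are arbitrarily deep full trees. -/
noncomputable def thicketDim {X : Type*} (𝓕 : Set (Set X)) : WithBot ℕ∞ :=
  sSup {d : WithBot ℕ∞ | ∃ n : ℕ, FullTree 𝓕 n ∧ d = ((n : ℕ∞) : WithBot ℕ∞)}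

lemma aux_ladder_tree {X : Type*} : ∀ (k : ℕ) (x : Fin (2 ^ k) → X) (F : Fin (2 ^ k) → Set X),
    (∀ i j : Fin (2 ^ k), x i ∈ F j ↔ i < j) →
    ∃ lab : List Bool → X, ∀ v : List Bool, v.length = k → ∃ j, RealizedBy lab v (F j) := by
  intro k
  induction k with
  | zero =>
    intro x F _
    refine ⟨fun _ => x 0, fun v hv => ⟨0, fun i => ?_⟩⟩
    have := i.isLt
    omega
  | succ k ih =>
    intro x F hlad
    have hn : (0 : ℕ) < 2 ^ k := Nat.pow_pos (by norm_num)
    have hsum : 2 ^ (k + 1) = 2 ^ k + 2 ^ k := by rw [pow_succ]; omega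
    have hlt : ∀ j : Fin (2 ^ k), (j : ℕ) < 2 ^ (k + 1) := fun j => by
      have := j.isLt; omega
    have hlt2 : ∀ j : Fin (2 ^ k), 2 ^ k + (j : ℕ) < 2 ^ (k + 1) := fun j => by
      have := j.isLt; omega
    set lo : Fin (2 ^ k) → Fin (2 ^ (k + 1)) := fun j => ⟨j, hlt j⟩ with hlo
    set hi : Fin (2 ^ k) → Fin (2 ^ (k + 1)) := fun j => ⟨2 ^ k + j, hlt2 j⟩ with hhi
    obtain ⟨labT, hT⟩ := ih (fun j => x (lo j)) (fun j => F (lo j)) (fun i j => by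
      rw [hlad]; exact Iff.rfl)
    obtain ⟨labF, hFa⟩ := ih (fun j => x (hi j)) (fun j => F (hi j)) (fun i j => by
      rw [hlad]; simp only [hhi, Fin.lt_def]; omega)
    have hp : 2 ^ k - 1 < 2 ^ (k + 1) := by omega
    set p : Fin (2 ^ (k + 1)) := ⟨2 ^ k - 1, hp⟩ with hpd
    refine ⟨fun u => match u with
      | [] => x p
      | true :: u' => labT u'
      | false :: u' => labF u', ?_⟩
    intro v hv
    match v with
    | b :: v' =>
      have hv' : v'.length = k := by simpa using hv
      cases b with
      | true =>
        obtain ⟨j, hj⟩ := hT v' hv'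
        refine ⟨lo j, fun i => ?_⟩
        refine Fin.cases ?_ (fun i' => ?_) i
        · have hnot : ¬ (p < lo j) := by
            have := j.isLt
            simp only [hlo, Fin.lt_def]
            have hpv : (p : ℕ) + 1 = 2 ^ k := Nat.sub_add_cancel hn
            omega
          simpa [hlad] using hnot
        · simpa using hj i'
      | false =>
        obtain ⟨j, hj⟩ := hFa v' hv'
        refine ⟨hi j, fun i => ?_⟩
        refine Fin.cases ?_ (fun i' => ?_) i
        · have hyes : p < hi j := by
            simp only [Fin.lt_def, hhi]
            have hpv : (p : ℕ) + 1 = 2 ^ k := Nat.sub_add_cancel hn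
            omega
          simpa [hlad] using hyes
        · simpa using hj i'

/-- If `(X,𝓕)` has a strict `2^k`-ladder, then its thicket dimension is at
least `k`: there is a full `X`-labeled complete balanced binary tree of depth
`k` over `𝓕`. -/
theorem fullTree_of_strict_ladder {X : Type*} (𝓕 : Set (Set X)) (k : ℕ)
    (x : Fin (2 ^ k) → X) (F : Fin (2 ^ k) → Set X)
    (hF : ∀ i, F i ∈ 𝓕)
    (hlad : ∀ i j : Fin (2 ^ k), x i ∈ F j ↔ i < j) :
    FullTree 𝓕 k := by
  obtain ⟨lab, h⟩ := aux_ladder_tree k x F hlad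
  exact ⟨lab, fun v hv => (h v hv).elim fun j hj => ⟨F j, hF j, hj⟩⟩
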